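/- Let γ₁, γ₂ ∈ ℝ with γ₂ > γ₁ > 0 and set r = γ₂/(γ₂ − γ₁). Let k_a ≥ 1 and let real sequences p_A^{(k)}, v_A^{(k)}, p_B^{(k)}, v_B^{(k)}, u^{(k)}, a^{(k)} (with a^{(k)} ≠ 0) satisfy, for k = 0, …, k_a − 1: u^{(k)} = γ₁a^{(k)}(p_B^{(k)} − p_A^{(k)}) + γ₂a^{(k)}(v_B^{(k)} − v_A^{(k)}) and p_B^{(k+1)} = p_B^{(k)} + v_B^{(k)}. Define φ_k = (γ₁p_A^{(k)} + γ₂v_A^{(k)} + u^{(k)}/a^{(k)})/(γ₁ − γ₂). Then p_B^{(0)} = r^{k_a}·p_B^{(k_a)} + ∑_{k=0}^{k_a−1} r^k·φ_k and v_B^{(0)} = −(γ₁/γ₂)·r^{k_a}·p_B^{(k_a)} − ((γ₂ − γ₁)/γ₂)·φ_0 − (γ₁/γ₂)·∑_{k=0}^{k_a−1} r^k·φ_k. -/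

import Mathlib

/-- closed-form expression of Bob's initial position and velocity
in terms of Alice's data and Bob's position at time k_a. -/
theorem stmt_9 (γ₁ γ₂ : ℝ) (h1 : 0 < γ₁) (h2 : γ₁ < γ₂)
    (r : ℝ) (hr : r = γ₂ / (γ₂ - γ₁))
    (ka : ℕ) (hka : 1 ≤ ka)
    (pA vA pB vB u a : ℕ → ℝ) (ha : ∀ k, a k ≠ 0)
    (hu : ∀ k < ka, u k = γ₁ * a k * (pB k - pA k) + γ₂ * a k * (vB k - vA k))
    (hp : ∀ k < ka, pB (k + 1) = pB k + vB k)
    (φ : ℕ → ℝ)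
    (hφ : ∀ k, φ k = (γ₁ * pA k + γ₂ * vA k + u k / a k) / (γ₁ - γ₂)) :
    pB 0 = r ^ ka * pB ka + ∑ k ∈ Finset.range ka, r ^ k * φ k
    ∧ vB 0 = -(γ₁ / γ₂) * r ^ ka * pB ka - ((γ₂ - γ₁) / γ₂) * φ 0
        - (γ₁ / γ₂) * ∑ k ∈ Finset.range ka, r ^ k * φ k := by
  have hγ2 : γ₂ ≠ 0 := by linarith
  have hd : γ₁ - γ₂ ≠ 0 := by intro h; linarith
  have hφ' : ∀ k < ka, φ k = (γ₁ * pB k + γ₂ * vB k) / (γ₁ - γ₂) := by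
    intro k hk
    have hdiv : u k / a k = γ₁ * (pB k - pA k) + γ₂ * (vB k - vA k) := by
      rw [hu k hk]; field_simp [ha k]
    rw [hφ k, hdiv]; ring_nf
  have hv : ∀ k < ka, vB k = ((γ₁ - γ₂) * φ k - γ₁ * pB k) / γ₂ := by
    intro k hk
    rw [hφ' k hk]; field_simp; ring
  have key : ∀ k < ka, pB k = r * pB (k + 1) + φ k := by
    intro k hk
    rw [hp k hk, hv k hk, hr]
    have hd2 : γ₂ - γ₁ ≠ 0 := by linarith
    field_simp
    ring
  have main : ∀ n ≤ ka, pB 0 = r ^ n * pB n + ∑ k ∈ Finset.range n, r ^ k * φ k := by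
    intro n hn
    induction n with
    | zero => simp
    | succ m ih =>
      rw [ih (le_of_lt (Nat.lt_of_succ_le hn)), Finset.sum_range_succ,
        key m (Nat.lt_of_succ_le hn)]
      ring
  have h0 := main ka le_rfl
  refine ⟨h0, ?_⟩
  have hv0 := hv 0 hka
  rw [hv0, h0]
  field_simp
  ring
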